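/- Let ε ∈ (0,1/4), f ∈ C¹ near 0 with f continuous and x·f(x) < 0 for x ≠ 0, and b ∈ 𝓑^α (so that x_b changes sign from negative to positive at its first positive zero z₁(b)). If x_b is differentiable at z₁(b), then x_b'(z₁(b)) = ε⁻¹[f(x_b(z₁(b)-1+ε/2)) - f(x_b(z₁(b)-1-ε/2))] > 0. -/

import Mathlib

theorem deriv_positive_at_first_zero (ε τ : ℝ) (hε : ε ∈ Set.Ioo (0:ℝ) (1/4))
    (hτ : τ ∈ Set.Ioc (0:ℝ) ε)
    (f : ℝ → ℝ) (hf : Continuous f)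
    (hfb : ∀ x : ℝ, x ≠ 0 → x * f x < 0)
    (b xb : ℝ → ℝ) (hb : ContinuousOn b (Set.Icc (-1 - ε/2) 0))
    (hbpos : ∀ t ∈ Set.Ioo (-1 - ε/2) (-τ), 0 < b t)
    (hbneg : ∀ t ∈ Set.Ioc (-τ) (0:ℝ), b t < 0)
    (hxbc : ContinuousOn xb (Set.Ici 0))
    (hxb0 : ∀ t ∈ Set.Ico (-1 - ε/2) (0:ℝ), xb t = b t)
    (hxb : ∀ t : ℝ, 0 ≤ t →
      xb t = (1/ε) * ∫ s in (t - 1 - ε/2)..(t - 1 + ε/2), f (xb s))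
    (z1 : ℝ) (hz1a : 1 - τ - ε/2 < z1) (hz1b : z1 < 1 - τ + ε/2)
    (hz1zero : xb z1 = 0) (hz1neg : ∀ s ∈ Set.Ico (0:ℝ) z1, xb s < 0)
    (hdiff : DifferentiableAt ℝ xb z1) :
    deriv xb z1 = ε⁻¹ * (f (xb (z1 - 1 + ε/2)) - f (xb (z1 - 1 - ε/2))) ∧
    0 < ε⁻¹ * (f (xb (z1 - 1 + ε/2)) - f (xb (z1 - 1 - ε/2))) := by
  obtain ⟨hε0, hε4⟩ := hε
  obtain ⟨hτ0, hτε⟩ := hτ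
  set u : ℝ := z1 - 1 + ε/2 with hu_def
  set a : ℝ := z1 - 1 - ε/2 with ha_def
  set h : ℝ → ℝ := fun s => f (xb s) with hh_def
  have ha1 : -1 - ε/2 < a := by simp only [ha_def]; linarith
  have ha2 : a < -τ := by simp only [ha_def]; linarith
  have ha0 : a < 0 := by linarith
  have hu1 : -τ < u := by simp only [hu_def]; linarith
  have hu2 : u < z1 := by simp only [hu_def]; linarith
  have hau : a < u := by simp only [ha_def, hu_def]; linarith
  have hz1pos : 0 < z1 := by linarith
  -- continuity of h on the negative part
  have hcont_neg : ∀ p ∈ Set.Ioo (-1 - ε/2) (0:ℝ), ContinuousAt h p := by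
    intro p hp
    have hbc : ContinuousAt b p :=
      hb.continuousAt (Icc_mem_nhds hp.1 hp.2)
    have hfb' : ContinuousAt (fun s => f (b s)) p := hf.continuousAt.comp hbc
    refine hfb'.congr ?_
    have hmem : Set.Ioo (-1 - ε/2) (0:ℝ) ∈ nhds p := Ioo_mem_nhds hp.1 hp.2
    filter_upwards [hmem] with s hs
    simp only [hh_def, hxb0 s ⟨hs.1.le, hs.2⟩]
  -- continuity of h within Ici 0
  have hcont_pos : ∀ p : ℝ, 0 ≤ p → ContinuousWithinAt h (Set.Ici 0) p := by
    intro p hp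
    exact hf.continuousAt.comp_continuousWithinAt (hxbc p hp)
  -- continuity of f ∘ b on subintervals
  have hfbcont : ContinuousOn (fun s => f (b s)) (Set.Icc (-1 - ε/2) 0) :=
    hf.comp_continuousOn hb
  have hhcont_Ici : ContinuousOn h (Set.Ici 0) := hf.comp_continuousOn hxbc
  have hne0 : ({(0:ℝ)}ᶜ : Set ℝ) ∈ MeasureTheory.ae MeasureTheory.volume :=
    MeasureTheory.compl_mem_ae_iff.2 (MeasureTheory.measure_singleton 0)
  -- integrability from a to c for c ≤ 0
  have hint_neg : ∀ c : ℝ, a ≤ c → c ≤ 0 → IntervalIntegrable h MeasureTheory.volume a c := by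
    intro c hac hc0
    have hsub : Set.uIcc a c ⊆ Set.Icc (-1 - ε/2) 0 := by
      rw [Set.uIcc_of_le hac]
      exact Set.Icc_subset_Icc ha1.le hc0
    have hfbint : IntervalIntegrable (fun s => f (b s)) MeasureTheory.volume a c :=
      (hfbcont.mono hsub).intervalIntegrable
    refine hfbint.congr_ae ?_
    have : ∀ᵐ s ∂(MeasureTheory.volume.restrict (Set.uIoc a c)),
        s ∈ Set.uIoc a c → (fun s => f (b s)) s = h s := by
      refine MeasureTheory.ae_restrict_of_ae ?_
      filter_upwards [hne0] with s hs hmem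
      rw [Set.uIoc_of_le hac, Set.mem_Ioc] at hmem
      obtain ⟨hm1, hm2⟩ := hmem
      have hs0 : s ≠ 0 := hs
      have : s ∈ Set.Ico (-1 - ε/2) (0:ℝ) :=
        ⟨(lt_trans ha1 hm1).le, lt_of_le_of_ne (le_trans hm2 hc0) hs0⟩
      simp only [hh_def, hxb0 s this]
    filter_upwards [this, MeasureTheory.ae_restrict_mem measurableSet_uIoc] with s h1 h2
    exact h1 h2
  -- integrability from a to any d ≥ a
  have hint_right : ∀ d : ℝ, a ≤ d → IntervalIntegrable h MeasureTheory.volume a d := by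
    intro d had
    rcases le_or_gt d 0 with hd | hd
    · exact hint_neg d had hd
    · refine (hint_neg 0 ha0.le le_rfl).trans ?_
      have hsub : Set.uIcc (0:ℝ) d ⊆ Set.Ici 0 := by
        rw [Set.uIcc_of_le hd.le]; exact Set.Icc_subset_Ici_self
      exact (hhcont_Ici.mono hsub).intervalIntegrable
  have hintgen : ∀ c d : ℝ, a ≤ c → a ≤ d → IntervalIntegrable h MeasureTheory.volume c d := by
    intro c d hc hd
    exact (hint_right c hc).symm.trans (hint_right d hd)
  -- F and the integral identity
  set F : ℝ → ℝ := fun x => ∫ s in a..x, h s with hF_def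
  have hFint : ∀ p q : ℝ, a ≤ p → a ≤ q → (∫ s in p..q, h s) = F q - F p := by
    intro p q hp hq
    have := intervalIntegral.integral_add_adjacent_intervals
      (hint_right p hp) (hintgen p q hp hq)
    simp only [hF_def]
    linarith
  -- measurability of h on Ici a
  have hmeas_Ici : MeasureTheory.AEStronglyMeasurable h
      (MeasureTheory.volume.restrict (Set.Ici a)) := by
    have hun : Set.Ico a 0 ∪ Set.Ici (0:ℝ) = Set.Ici a := Set.Ico_union_Ici_eq_Ici ha0.le
    rw [← hun]
    rw [aestronglyMeasurable_union_iff]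
    constructor
    · have : ContinuousOn h (Set.Ico a 0) := by
        refine ContinuousOn.congr ((hf.comp_continuousOn hb).mono ?_) ?_
        · exact Set.Ico_subset_Icc_self.trans (Set.Icc_subset_Icc ha1.le le_rfl)
        · intro s hs
          simp only [hh_def, Function.comp,
            hxb0 s ⟨le_trans ha1.le hs.1, hs.2⟩]
      exact this.aestronglyMeasurable measurableSet_Ico
    · exact hhcont_Ici.aestronglyMeasurable measurableSet_Ici
  -- derivative of F at u within Ici u
  have hcw_u : ContinuousWithinAt h (Set.Ioi u) u := by
    rcases lt_or_ge u 0 with hu0 | hu0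
    · exact (hcont_neg u ⟨by linarith, hu0⟩).continuousWithinAt
    · exact (hcont_pos u hu0).mono (fun s hs => le_trans hu0 (le_of_lt hs))
  have hmeas_u : StronglyMeasurableAtFilter h (nhdsWithin u (Set.Ioi u)) := by
    refine ⟨Set.Ici a, ?_, hmeas_Ici⟩
    exact Filter.mem_of_superset self_mem_nhdsWithin
      (fun s hs => le_of_lt (lt_trans hau hs))
  have hFu : HasDerivWithinAt F (h u) (Set.Ici u) u :=
    intervalIntegral.integral_hasDerivWithinAt_right (hint_right u hau.le) hmeas_u hcw_u
  -- derivative of F at a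
  have hca : ContinuousAt h a := hcont_neg a ⟨ha1, ha0⟩
  have hmeas_a : StronglyMeasurableAtFilter h (nhds a) := by
    refine ⟨Set.Ioo (-1 - ε/2) 0, Ioo_mem_nhds ha1 ha0, ?_⟩
    have : ContinuousOn h (Set.Ioo (-1 - ε/2) 0) := by
      refine ContinuousOn.congr ((hf.comp_continuousOn hb).mono Set.Ioo_subset_Icc_self) ?_
      intro s hs
      simp only [hh_def, Function.comp, hxb0 s ⟨hs.1.le, hs.2⟩]
    exact this.aestronglyMeasurable measurableSet_Ioo
  have hFa : HasDerivAt F (h a) a :=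
    intervalIntegral.integral_hasDerivAt_right (hint_right a le_rfl) hmeas_a hca
  -- compositions
  have hw : HasDerivWithinAt (fun t : ℝ => t - 1 + ε/2) 1 (Set.Ici z1) z1 := by
    simpa using (((hasDerivAt_id z1).sub_const 1).add_const (ε/2)).hasDerivWithinAt
  have hv : HasDerivWithinAt (fun t : ℝ => t - 1 - ε/2) 1 (Set.Ici z1) z1 := by
    simpa using (((hasDerivAt_id z1).sub_const 1).sub_const (ε/2)).hasDerivWithinAt
  have hmaps : Set.MapsTo (fun t : ℝ => t - 1 + ε/2) (Set.Ici z1) (Set.Ici u) := by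
    intro t ht
    simp only [Set.mem_Ici, hu_def] at *
    linarith
  have hcomp1 : HasDerivWithinAt (fun t : ℝ => F (t - 1 + ε/2)) (h u * 1) (Set.Ici z1) z1 := by
    have := hFu.comp z1 hw hmaps
    simpa [Function.comp_def] using this
  have hcomp2 : HasDerivWithinAt (fun t : ℝ => F (t - 1 - ε/2)) (h a * 1) (Set.Ici z1) z1 := by
    have := hFa.comp_hasDerivWithinAt z1 hv
    simpa [Function.comp_def] using this
  have hG : HasDerivWithinAt (fun t : ℝ => (1/ε) * (F (t - 1 + ε/2) - F (t - 1 - ε/2)))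
      ((1/ε) * (h u * 1 - h a * 1)) (Set.Ici z1) z1 :=
    (hcomp1.sub hcomp2).const_mul (1/ε)
  -- xb agrees with G on Ici z1
  have heq : ∀ t ∈ Set.Ici z1, xb t =
      (1/ε) * (F (t - 1 + ε/2) - F (t - 1 - ε/2)) := by
    intro t ht
    have ht0 : (0:ℝ) ≤ t := le_trans hz1pos.le ht
    rw [hxb t ht0]
    congr 1
    exact hFint (t - 1 - ε/2) (t - 1 + ε/2)
      (by simp only [Set.mem_Ici] at ht; simp only [ha_def]; linarith)
      (by simp only [Set.mem_Ici] at ht; simp only [ha_def]; linarith)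
  have hxbd : HasDerivWithinAt xb ((1/ε) * (h u * 1 - h a * 1)) (Set.Ici z1) z1 :=
    hG.congr heq (heq z1 Set.self_mem_Ici)
  have hudw : UniqueDiffWithinAt ℝ (Set.Ici z1) z1 := uniqueDiffOn_Ici z1 z1 Set.self_mem_Ici
  have hderiv : deriv xb z1 = (1/ε) * (h u * 1 - h a * 1) := by
    rw [← hdiff.derivWithin hudw]
    exact hxbd.derivWithin hudw
  -- sign facts
  have hxbu_neg : xb u < 0 := by
    rcases lt_or_ge u 0 with hu0 | hu0
    · rw [hxb0 u ⟨by linarith, hu0⟩]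
      exact hbneg u ⟨hu1, hu0.le⟩
    · exact hz1neg u ⟨hu0, hu2⟩
  have hxba_pos : 0 < xb a := by
    rw [hxb0 a ⟨ha1.le, ha0⟩]
    exact hbpos a ⟨ha1, ha2⟩
  have hfu_pos : 0 < f (xb u) := by nlinarith [hfb (xb u) hxbu_neg.ne]
  have hfa_neg : f (xb a) < 0 := by nlinarith [hfb (xb a) hxba_pos.ne']
  constructor
  · rw [hderiv]
    simp only [hh_def, mul_one, one_div]
  · exact mul_pos (inv_pos.2 hε0) (by linarith)
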